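/- Let Ω ⊂ P(ℝ^d) be a properly convex domain, γ ∈ Aut(Ω), and suppose γ fixes two distinct points x, y ∈ ∂Ω with (x,y) ⊂ Ω, and inf_{p∈Ω} H_Ω(p, γp) = 0. If moreover x and y are eigenlines of γ, then all eigenvalues of a lift of γ to SL±(d,ℝ) have the same absolute value, and γ fixes every point of the segment (x,y). -/

import Mathlib

open Matrix Topology Filter
open scoped MatrixGroups

noncomputable section

abbrev Vd (d : ℕ) := Fin d → ℝ
abbrev Md (d : ℕ) := Matrix (Fin d) (Fin d) ℝ

open scoped Classical in
/-- The multiset of absolute values of the complex eigenvalues (roots of the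
characteristic polynomial over `ℂ`, with multiplicity) of a real `d × d` matrix. -/
def eigMods {d : ℕ} (g : Md d) : Multiset ℝ :=
  ((g.charpoly.map (algebraMap ℝ ℂ)).roots).map (fun z => ‖z‖)

open scoped Classical in
/-- `g` is proximal: the largest modulus of an eigenvalue is attained exactly once. -/
def IsProximal {d : ℕ} (g : Md d) : Prop :=
  ∃ r ∈ eigMods g, (eigMods g).count r = 1 ∧ ∀ s ∈ eigMods g, s ≤ r

/-- `ℓ` is the attracting eigenline of `g`: the eigenspace of a real eigenvalue of
maximal modulus, of dimension one. -/
def IsTopEigenline {d : ℕ} (g : Md d) (ℓ : Submodule ℝ (Vd d)) : Prop :=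
  ∃ μ : ℝ, (∀ s ∈ eigMods g, s ≤ |μ|) ∧
    ℓ = Module.End.eigenspace (Matrix.toLin' g) μ ∧ Module.finrank ℝ ℓ = 1

/-- `C` is the cone over a properly convex domain `Ω ⊂ P(ℝ^d)`: an open convex
cone, nonempty, whose closure contains no line (salient). -/
def IsProperCone {d : ℕ} (C : Set (Vd d)) : Prop :=
  IsOpen C ∧ Convex ℝ C ∧ C.Nonempty ∧
    (∀ v ∈ C, ∀ t : ℝ, 0 < t → t • v ∈ C) ∧
    (∀ v ∈ closure C, -v ∈ closure C → v = 0)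

/-- `g` induces an automorphism of the properly convex domain with cone `C`. -/
def ConeAut {d : ℕ} (C : Set (Vd d)) (g : Md d) : Prop :=
  IsUnit g ∧ (fun v => g.mulVec v) '' C = C

/-- Gauge `M(u/v) = inf{t > 0 : t v - u ∈ closure C}`. -/
def gaugeM {d : ℕ} (C : Set (Vd d)) (u v : Vd d) : ℝ :=
  sInf {t : ℝ | 0 < t ∧ t • v - u ∈ closure C}

/-- The Hilbert distance between the projective points `[u]`, `[v]` of the properly
convex domain with cone `C` : `H([u],[v]) = (1/2) log (M(u/v) M(v/u))`. -/
def hilbertDist {d : ℕ} (C : Set (Vd d)) (u v : Vd d) : ℝ :=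
  (1/2) * Real.log (gaugeM C u v * gaugeM C v u)

/-- The closed projective segment `[[u],[v]]` is contained in `∂Ω`. -/
def BSeg {d : ℕ} (C : Set (Vd d)) (u v : Vd d) : Prop :=
  ∀ s t : ℝ, 0 ≤ s → 0 ≤ t → s • u + t • v ∉ C

/-- `[v]` belongs to the open face `F_Ω([u])`: either `[v] = [u]`, or some open
projective segment contained in `closure Ω` contains both `[u]` and `[v]`. -/
def InFace {d : ℕ} (C : Set (Vd d)) (u v : Vd d) : Prop :=
  v ∈ closure C ∧ ((∃ t : ℝ, 0 < t ∧ v = t • u) ∨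
    ∃ ε : ℝ, 0 < ε ∧ u - ε • v ∈ closure C ∧ v - ε • u ∈ closure C)

/-- `[v]` is an extreme point of `closure Ω`: it is not in the interior of any
nondegenerate projective segment contained in `closure Ω`. -/
def IsExtremePt {d : ℕ} (C : Set (Vd d)) (v : Vd d) : Prop :=
  v ∈ closure C ∧ v ≠ 0 ∧ ∀ a ∈ closure C, ∀ b ∈ closure C,
    ∀ s t : ℝ, 0 < s → 0 < t → v = s • a + t • b → ∃ c : ℝ, a = c • b


/-- The quotient topology on the projective space `P(V)`. -/
instance projTopology {K V : Type*} [DivisionRing K] [AddCommGroup V] [Module K V]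
    [TopologicalSpace V] : TopologicalSpace (Projectivization K V) :=
  inferInstanceAs (TopologicalSpace (Quotient (projectivizationSetoid K V)))

/-- The set of projective points with a representative in `A`. -/
def projSet {d : ℕ} (A : Set (Vd d)) : Set (Projectivization ℝ (Vd d)) :=
  {x | ∃ (v : Vd d) (hv : v ≠ 0), v ∈ A ∧ x = Projectivization.mk ℝ v hv}

/-- The action of `γ ∈ GL(d,ℝ)` on the projective space `P(ℝ^d)`. -/
def pAct {d : ℕ} (γ : GL (Fin d) ℝ) : Projectivization ℝ (Vd d) → Projectivization ℝ (Vd d) :=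
  Projectivization.map (Matrix.toLin' (↑γ : Md d)) (by
    have : Function.LeftInverse (Matrix.toLin' (↑γ⁻¹ : Md d)) (Matrix.toLin' (↑γ : Md d)) := by
      intro v
      simp only [Matrix.toLin'_apply, Matrix.mulVec_mulVec]
      rw [Matrix.coe_units_inv, Matrix.nonsing_inv_mul _ ((Matrix.isUnit_iff_isUnit_det _).mp γ.isUnit), Matrix.one_mulVec]
    exact this.injective)

/-- `T` lies in the closure of `Λ` in `P(End(ℝ^d))`. -/
def InEndClosure {d : ℕ} (Λ : Set (Md d)) (T : Md d) : Prop :=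
  T ≠ 0 ∧ ∃ (g : ℕ → Md d) (c : ℕ → ℝ), (∀ n, g n ∈ Λ) ∧
    Tendsto (fun n => c n • g n) atTop (nhds T)



section Stmt13Aux

variable {d : ℕ} {C : Set (Vd d)}

lemma aux_clC_smul (hC : IsProperCone C) {v : Vd d} {t : ℝ} (hv : v ∈ closure C) (ht : 0 < t) :
    t • v ∈ closure C := by
  have hcont : Continuous (fun w : Vd d => t • w) := continuous_const_smul t
  have h1 : t • v ∈ (fun w : Vd d => t • w) '' closure C := ⟨v, hv, rfl⟩
  have h2 := image_closure_subset_closure_image (s := C) hcont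
  refine closure_mono ?_ (h2 h1)
  rintro _ ⟨w, hw, rfl⟩
  exact hC.2.2.2.1 w hw t ht

lemma aux_clC_add (hC : IsProperCone C) {a b : Vd d} (ha : a ∈ closure C) (hb : b ∈ closure C) :
    a + b ∈ closure C := by
  have hmid : (1/2 : ℝ) • a + (1/2 : ℝ) • b ∈ closure C :=
    hC.2.1.closure ha hb (by norm_num) (by norm_num) (by norm_num)
  have := aux_clC_smul hC hmid (by norm_num : (0:ℝ) < 2)
  convert this using 1
  module

lemma aux_zero_mem (hC : IsProperCone C) : (0 : Vd d) ∈ closure C := by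
  obtain ⟨v₀, hv₀⟩ := hC.2.2.1
  have htend : Tendsto (fun n : ℕ => (1/(n+1) : ℝ) • v₀) atTop (𝓝 0) := by
    simpa using (tendsto_one_div_add_atTop_nhds_zero_nat (𝕜 := ℝ)).smul_const v₀
  exact mem_closure_of_tendsto htend
    (Filter.Eventually.of_forall fun n => hC.2.2.2.1 v₀ hv₀ _ (by positivity))

lemma aux_mulVec_closure {g : Md d} (hgC : (fun v => g.mulVec v) '' C = C) {v : Vd d}
    (hv : v ∈ closure C) : g.mulVec v ∈ closure C := by
  have hcont : Continuous (fun w : Vd d => g.mulVec w) := by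
    have := (Matrix.mulVecLin g).continuous_of_finiteDimensional
    exact this
  have h1 : g.mulVec v ∈ (fun w : Vd d => g.mulVec w) '' closure C := ⟨v, hv, rfl⟩
  have h2 := image_closure_subset_closure_image (s := C) hcont
  rw [hgC] at h2
  exact h2 h1

lemma aux_mulVec_reVec (g : Md d) (ξ : Fin d → ℂ) :
    g.mulVec (fun i => (ξ i).re) = fun i => (((g.map (algebraMap ℝ ℂ)).mulVec ξ) i).re := by
  funext i
  simp only [Matrix.mulVec, dotProduct, Matrix.map_apply]
  rw [Complex.re_sum]
  refine Finset.sum_congr rfl fun j _ => ?_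
  simp [Complex.re_ofReal_mul]

lemma aux_gauge_nonempty (hC : IsProperCone C) {p : Vd d} (hp : p ∈ C) (zv : Vd d) :
    ∃ t : ℝ, 0 < t ∧ t • p - zv ∈ closure C := by
  obtain ⟨ε', hε', hball⟩ := Metric.isOpen_iff.mp hC.1 p hp
  set δ : ℝ := ε' / (2 * (‖zv‖ + 1)) with hδdef
  have hδ : 0 < δ := by positivity
  have hmem : p - δ • zv ∈ C := by
    apply hball
    rw [Metric.mem_ball, dist_eq_norm]
    have h1 : ‖p - δ • zv - p‖ = δ * ‖zv‖ := by
      rw [sub_sub_cancel_left, norm_neg, norm_smul, Real.norm_eq_abs, abs_of_pos hδ]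
    rw [h1]
    have h2 : δ * ‖zv‖ ≤ δ * (‖zv‖ + 1) := by nlinarith [norm_nonneg zv]
    have h3 : δ * (‖zv‖ + 1) = ε' / 2 := by
      rw [hδdef]; field_simp
    linarith
  refine ⟨δ⁻¹, inv_pos.mpr hδ, ?_⟩
  have := hC.2.2.2.1 _ hmem δ⁻¹ (inv_pos.mpr hδ)
  have heq : δ⁻¹ • (p - δ • zv) = δ⁻¹ • p - zv := by
    rw [smul_sub, smul_smul, inv_mul_cancel₀ (ne_of_gt hδ), one_smul]
  rw [heq] at this
  exact subset_closure this

lemma aux_eig_le (hC : IsProperCone C) (g : Md d)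
    (hgC : (fun v => g.mulVec v) '' C = C) (z : ℂ) (ζ : Fin d → ℂ) (hζ : ζ ≠ 0)
    (heig : (g.map (algebraMap ℝ ℂ)).mulVec ζ = z • ζ)
    {w : Vd d} (hw : w ∈ C) {t : ℝ} (ht : 0 < t)
    (hm : t • w - g.mulVec w ∈ closure C) : ‖z‖ ≤ t := by
  by_contra hcon
  push_neg at hcon
  set r : ℝ := ‖z‖ with hrdef
  have hrpos : 0 < r := lt_trans ht hcon
  set x : Vd d := fun i => (ζ i).re with hxdef
  set y : Vd d := fun i => (ζ i).im with hydef
  -- action of powers on real parts of complex multiples of ζ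
  have hpow : ∀ (n : ℕ) (l : ℂ), (g ^ n).mulVec (fun i => ((l • ζ) i).re)
      = fun i => (((z ^ n * l) • ζ) i).re := by
    intro n
    induction n with
    | zero => intro l; simp [Matrix.one_mulVec]
    | succ n ih =>
      intro l
      have hstep : g.mulVec (fun i => ((l • ζ) i).re)
          = fun i => (((z * l) • ζ) i).re := by
        rw [aux_mulVec_reVec]
        have h2 : (g.map (algebraMap ℝ ℂ)).mulVec (l • ζ) = (z * l) • ζ := by
          rw [Matrix.mulVec_smul, heig, smul_smul, mul_comm]
        rw [h2]
      have hcomp : (g ^ (n+1)).mulVec (fun i => ((l • ζ) i).re)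
          = (g ^ n).mulVec (g.mulVec (fun i => ((l • ζ) i).re)) := by
        rw [Matrix.mulVec_mulVec, ← pow_succ]
      rw [hcomp, hstep, ih (z * l)]
      funext i
      congr 2
      ring
  -- invariance of closure under powers
  have hinvcl : ∀ (n : ℕ) (v : Vd d), v ∈ closure C → (g ^ n).mulVec v ∈ closure C := by
    intro n
    induction n with
    | zero => intro v hv; simpa [Matrix.one_mulVec] using hv
    | succ n ih =>
      intro v hv
      have h1 : (g ^ (n+1)).mulVec v = (g ^ n).mulVec (g.mulVec v) := by
        rw [Matrix.mulVec_mulVec, ← pow_succ]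
      rw [h1]
      exact ih _ (aux_mulVec_closure hgC hv)
  -- domination
  have hdom : ∀ n : ℕ, t ^ n • w - (g ^ n).mulVec w ∈ closure C := by
    intro n
    induction n with
    | zero => simpa [Matrix.one_mulVec] using aux_zero_mem hC
    | succ n ih =>
      have h1 : t • (t ^ n • w - (g ^ n).mulVec w) ∈ closure C := aux_clC_smul hC ih ht
      have h2 : (g ^ n).mulVec (t • w - g.mulVec w) ∈ closure C := hinvcl n _ hm
      have h3 := aux_clC_add hC h1 h2
      have heq : t • (t ^ n • w - (g ^ n).mulVec w) + (g ^ n).mulVec (t • w - g.mulVec w)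
          = t ^ (n+1) • w - (g ^ (n+1)).mulVec w := by
        rw [Matrix.mulVec_sub, Matrix.mulVec_smul, Matrix.mulVec_mulVec, ← pow_succ,
          smul_sub, smul_smul, ← pow_succ']
        abel
      rwa [heq] at h3
  -- epsilon
  obtain ⟨ε', hε', hball⟩ := Metric.isOpen_iff.mp hC.1 w hw
  set K : ℝ := ‖x‖ + ‖y‖ + 1 with hKdef
  have hK : 0 < K := by positivity
  set ε : ℝ := ε' / (2 * K) with hεdef
  have hεpos : 0 < ε := by positivity
  have hmem : ∀ (l : ℂ), ‖l‖ ≤ 1 → ∀ σ : ℝ, |σ| ≤ 1 →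
      w + (σ * ε) • (fun i => ((l • ζ) i).re) ∈ C := by
    intro l hl σ hσ
    apply hball
    rw [Metric.mem_ball, dist_eq_norm, add_sub_cancel_left, norm_smul, Real.norm_eq_abs]
    have hdecomp : (fun i => ((l • ζ) i).re) = l.re • x - l.im • y := by
      funext i
      simp [hxdef, hydef, Complex.mul_re]
    have hnb : ‖(fun i => ((l • ζ) i).re)‖ ≤ ‖x‖ + ‖y‖ := by
      rw [hdecomp]
      calc ‖l.re • x - l.im • y‖ ≤ ‖l.re • x‖ + ‖l.im • y‖ := norm_sub_le _ _
        _ = |l.re| * ‖x‖ + |l.im| * ‖y‖ := by rw [norm_smul, norm_smul, Real.norm_eq_abs, Real.norm_eq_abs]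
        _ ≤ 1 * ‖x‖ + 1 * ‖y‖ := by
            have h1 : |l.re| ≤ 1 := le_trans (Complex.abs_re_le_norm l) hl
            have h2 : |l.im| ≤ 1 := le_trans (Complex.abs_im_le_norm l) hl
            have := norm_nonneg x; have := norm_nonneg y
            nlinarith
        _ = ‖x‖ + ‖y‖ := by ring
    have habs : |σ * ε| ≤ ε := by
      rw [abs_mul, abs_of_pos hεpos]
      nlinarith
    calc |σ * ε| * ‖(fun i => ((l • ζ) i).re)‖ ≤ ε * (‖x‖ + ‖y‖) := by
          have := norm_nonneg (fun i => ((l • ζ) i).re)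
          nlinarith
      _ < ε * K := by nlinarith
      _ = ε' / 2 := by rw [hεdef]; field_simp
      _ < ε' := by linarith
  -- the kill step
  have hkill : ∀ u0 : ℂ, ‖u0‖ = 1 → (fun i => ((u0 • ζ) i).re) = 0 := by
    intro u0 hu0
    set ρ : Vd d := fun i => ((u0 • ζ) i).re with hρdef
    have hchain : ∀ σ : ℝ, |σ| ≤ 1 → (σ * ε) • ρ ∈ closure C := by
      intro σ hσ
      have hn : ∀ n : ℕ, ((t/r)^n) • w + (σ * ε) • ρ ∈ closure C := by
        intro n
        have hrn : (0:ℝ) < r ^ n := pow_pos hrpos n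
        set l : ℂ := u0 * (starRingEnd ℂ) (z ^ n) / ((r ^ n : ℝ) : ℂ) with hldef
        have habs_zn : ‖z ^ n‖ = r ^ n := by rw [norm_pow]
        have habsl : ‖l‖ = 1 := by
          rw [hldef, norm_div, norm_mul, hu0, Complex.norm_conj, habs_zn,
            Complex.norm_real, Real.norm_eq_abs, abs_of_pos hrn, one_mul, div_self (ne_of_gt hrn)]
        have hmulconj : z ^ n * (starRingEnd ℂ) (z ^ n) = (((r ^ n : ℝ) : ℂ)) ^ 2 := by
          rw [Complex.mul_conj, ← habs_zn, Complex.normSq_eq_norm_sq]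
          push_cast
          ring
        have hzl : z ^ n * l = ((r ^ n : ℝ) : ℂ) * u0 := by
          have hrnC : ((r ^ n : ℝ) : ℂ) ≠ 0 := by
            simpa using ne_of_gt hrn
          rw [hldef, ← mul_div_assoc, div_eq_iff hrnC]
          calc z ^ n * (u0 * (starRingEnd ℂ) (z ^ n))
              = (z ^ n * (starRingEnd ℂ) (z ^ n)) * u0 := by ring
            _ = (((r ^ n : ℝ) : ℂ)) ^ 2 * u0 := by rw [hmulconj]
            _ = ((r ^ n : ℝ) : ℂ) * u0 * ((r ^ n : ℝ) : ℂ) := by ring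
        have hact : (g ^ n).mulVec (fun i => ((l • ζ) i).re) = (r ^ n : ℝ) • ρ := by
          rw [hpow n l, hzl]
          funext i
          simp only [hρdef, Pi.smul_apply, smul_eq_mul, mul_assoc, Complex.re_ofReal_mul]
        have h1 : w + (σ * ε) • (fun i => ((l • ζ) i).re) ∈ C := hmem l (le_of_eq habsl) σ hσ
        have h2 : (g ^ n).mulVec (w + (σ * ε) • (fun i => ((l • ζ) i).re)) ∈ closure C :=
          hinvcl n _ (subset_closure h1)
        have h3 : (g ^ n).mulVec (w + (σ * ε) • (fun i => ((l • ζ) i).re))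
            = (g ^ n).mulVec w + (σ * ε * r ^ n) • ρ := by
          rw [Matrix.mulVec_add, Matrix.mulVec_smul, hact, smul_smul]
        rw [h3] at h2
        have h4 := aux_clC_add hC (hdom n) h2
        have h5 : (t ^ n • w - (g ^ n).mulVec w) + ((g ^ n).mulVec w + (σ * ε * r ^ n) • ρ)
            = t ^ n • w + (σ * ε * r ^ n) • ρ := by abel
        rw [h5] at h4
        have h6 := aux_clC_smul hC h4 (inv_pos.mpr hrn)
        have h7 : (r ^ n)⁻¹ • (t ^ n • w + (σ * ε * r ^ n) • ρ)
            = ((t/r)^n) • w + (σ * ε) • ρ := by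
          have e1 : (r ^ n)⁻¹ * t ^ n = (t/r)^n := by
            rw [div_pow, inv_mul_eq_div]
          have e2 : (r ^ n)⁻¹ * (σ * ε * r ^ n) = σ * ε := by
            field_simp
          rw [smul_add, smul_smul, smul_smul, e1, e2]
        rwa [h7] at h6
      have hlim : Tendsto (fun n : ℕ => ((t/r)^n) • w + (σ * ε) • ρ) atTop
          (𝓝 ((σ * ε) • ρ)) := by
        have h0 : Tendsto (fun n : ℕ => (t/r)^n) atTop (𝓝 0) :=
          tendsto_pow_atTop_nhds_zero_of_lt_one (by positivity) ((div_lt_one hrpos).mpr hcon)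
        have := (h0.smul_const w).add (tendsto_const_nhds (x := (σ * ε) • ρ))
        simpa using this
      exact isClosed_closure.mem_of_tendsto hlim (Eventually.of_forall hn)
    have hplus := hchain 1 (by norm_num)
    have hminus := hchain (-1) (by norm_num)
    have hneg : -((1 * ε) • ρ) ∈ closure C := by
      have : -((1 * ε) • ρ) = ((-1) * ε) • ρ := by
        rw [← neg_smul]; ring_nf
      rw [this]; exact hminus
    have h0 := hC.2.2.2.2 _ hplus hneg
    have : ρ = 0 := by
      rcases smul_eq_zero.mp h0 with h | h
      · exfalso; rw [one_mul] at h; exact ne_of_gt hεpos h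
      · exact h
    exact this
  have hx0 : x = 0 := by
    have := hkill 1 (by simp)
    rw [← this]
    funext i
    simp [hxdef]
  have hy0 : y = 0 := by
    have := hkill (-Complex.I) (by simp)
    rw [hydef]
    funext i
    have := congrFun this i
    simpa [Complex.mul_re] using this
  apply hζ
  funext i
  apply Complex.ext
  · exact congrFun hx0 i
  · exact congrFun hy0 i

lemma aux_scalar_sub_mulVec {K : Type*} [Field K] (M : Matrix (Fin d) (Fin d) K) (z : K)
    (v : Fin d → K) :
    (Matrix.scalar (Fin d) z - M).mulVec v = z • v - M.mulVec v := by
  rw [Matrix.sub_mulVec]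
  congr 1
  ext i
  simp [Matrix.scalar, Matrix.mulVec_diagonal]

lemma aux_charpoly_eval {K : Type*} [Field K] (M : Matrix (Fin d) (Fin d) K) (z : K) :
    M.charpoly.eval z = (Matrix.scalar (Fin d) z - M).det := by
  rw [Matrix.charpoly, eval_det, matPolyEquiv_charmatrix]
  simp

lemma aux_eigvec_of_mem {g : Md d} {r : ℝ} (hr : r ∈ eigMods g) :
    ∃ (z : ℂ) (ζ : Fin d → ℂ), ζ ≠ 0 ∧ (g.map (algebraMap ℝ ℂ)).mulVec ζ = z • ζ ∧
      ‖z‖ = r := by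
  obtain ⟨z, hz, rfl⟩ := Multiset.mem_map.mp hr
  have hzr : ((g.map (algebraMap ℝ ℂ)).charpoly).IsRoot z := by
    rw [Matrix.charpoly_map]
    exact (Polynomial.mem_roots'.mp hz).2
  have hdet : (Matrix.scalar (Fin d) z - g.map (algebraMap ℝ ℂ)).det = 0 := by
    rw [← aux_charpoly_eval]
    exact hzr
  obtain ⟨ζ, hζ, h0⟩ := Matrix.exists_mulVec_eq_zero_iff.mpr hdet
  refine ⟨z, ζ, hζ, ?_, rfl⟩
  rw [aux_scalar_sub_mulVec] at h0
  have := sub_eq_zero.mp h0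
  exact this.symm

lemma aux_real_mem_eigMods {g : Md d} {α : ℝ} {u : Vd d} (hu : u ≠ 0)
    (h : g.mulVec u = α • u) : |α| ∈ eigMods g := by
  have hdet : (Matrix.scalar (Fin d) α - g).det = 0 := by
    rw [← Matrix.exists_mulVec_eq_zero_iff]
    exact ⟨u, hu, by rw [aux_scalar_sub_mulVec, h, sub_self]⟩
  have hroot : g.charpoly.IsRoot α := by
    rw [Polynomial.IsRoot, aux_charpoly_eval]
    exact hdet
  refine Multiset.mem_map.mpr ⟨algebraMap ℝ ℂ α, ?_, by simp⟩
  refine Polynomial.mem_roots'.mpr ⟨?_, hroot.map⟩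
  exact (g.charpoly_monic.map (algebraMap ℝ ℂ)).ne_zero

end Stmt13Aux

/-- if `γ ∈ Aut(Ω)` fixes two distinct boundary points `[u], [v]` that
are eigenlines, the open segment `([u],[v])` lies in `Ω`, and the infimum of the
Hilbert displacement of `γ` is `0`, then all eigenvalues of a lift of `γ` have the
same modulus and `γ` fixes every point of the segment. -/
theorem stmt13 {d : ℕ} (C : Set (Vd d)) (hC : IsProperCone C) (g : Md d) (hg : ConeAut C g)
    (u v : Vd d) (hu : u ∈ closure C) (hvcl : v ∈ closure C) (hu0 : u ≠ 0) (hv0 : v ≠ 0)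
    (hbdu : u ∉ C) (hbdv : v ∉ C)
    (hne : ∀ e : ℝ, u ≠ e • v)
    (hseg : ∀ s t : ℝ, 0 < s → 0 < t → s • u + t • v ∈ C)
    (hfixu : ∃ α : ℝ, g.mulVec u = α • u) (hfixv : ∃ β : ℝ, g.mulVec v = β • v)
    (hinf : IsGLB ((fun w => hilbertDist C w (g.mulVec w)) '' C) 0) :
    (∀ r ∈ eigMods g, ∀ s ∈ eigMods g, r = s) ∧
      ∀ s t : ℝ, 0 < s → 0 < t → ∃ μ : ℝ, g.mulVec (s • u + t • v) = μ • (s • u + t • v) := by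
  have hdetR : IsUnit g.det := (Matrix.isUnit_iff_isUnit_det _).mp hg.1
  set h : Md d := g⁻¹ with hhdef
  have hinv : h * g = 1 := Matrix.nonsing_inv_mul g hdetR
  have hginv : ∀ w : Vd d, h.mulVec (g.mulVec w) = w := fun w => by
    rw [Matrix.mulVec_mulVec, hinv, Matrix.one_mulVec]
  have hhC : (fun w => h.mulVec w) '' C = C := by
    conv_lhs => rw [← hg.2]
    rw [Set.image_image]
    have h2 : (fun w => h.mulVec (g.mulVec w)) = fun w => w := funext hginv
    rw [h2, Set.image_id']
  have hdetC : (g.map (algebraMap ℝ ℂ)).det ≠ 0 := by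
    have h1 : (g.map (algebraMap ℝ ℂ)).det = algebraMap ℝ ℂ g.det := by
      rw [← RingHom.mapMatrix_apply, ← RingHom.map_det]
    rw [h1]
    simpa using hdetR.ne_zero
  -- key inequality
  have key : ∀ r ∈ eigMods g, ∀ s ∈ eigMods g, r ≤ s := by
    intro r hrmem s hsmem
    obtain ⟨z, ζ, hζ, hzeig, hzr⟩ := aux_eigvec_of_mem hrmem
    obtain ⟨z', ζ', hζ', hz'eig, hz's⟩ := aux_eigvec_of_mem hsmem
    have hz'0 : z' ≠ 0 := by
      intro h0
      apply hdetC
      rw [← Matrix.exists_mulVec_eq_zero_iff]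
      exact ⟨ζ', hζ', by rw [hz'eig, h0, zero_smul]⟩
    have hz0 : z ≠ 0 := by
      intro h0
      apply hdetC
      rw [← Matrix.exists_mulVec_eq_zero_iff]
      exact ⟨ζ, hζ, by rw [hzeig, h0, zero_smul]⟩
    have hrpos : 0 < r := by rw [← hzr]; exact norm_pos_iff.mpr hz0
    have hspos : 0 < s := by rw [← hz's]; exact norm_pos_iff.mpr hz'0
    -- inverse eigenvector
    have hz'inv : (h.map (algebraMap ℝ ℂ)).mulVec ζ' = z'⁻¹ • ζ' := by
      have hmulc : (h.map (algebraMap ℝ ℂ)) * (g.map (algebraMap ℝ ℂ)) = 1 := by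
        rw [← Matrix.map_mul, hinv, Matrix.map_one _ (map_zero _) (map_one _)]
      have hc : z' • (h.map (algebraMap ℝ ℂ)).mulVec ζ' = ζ' := by
        rw [← Matrix.mulVec_smul, ← hz'eig, Matrix.mulVec_mulVec, hmulc, Matrix.one_mulVec]
      calc (h.map (algebraMap ℝ ℂ)).mulVec ζ'
          = z'⁻¹ • (z' • (h.map (algebraMap ℝ ℂ)).mulVec ζ') := by
            rw [smul_smul, inv_mul_cancel₀ hz'0, one_smul]
        _ = z'⁻¹ • ζ' := by rw [hc]
    set L : ℝ := (1/2) * Real.log (s⁻¹ * r) with hLdef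
    have hLlb : L ∈ lowerBounds ((fun w => hilbertDist C w (g.mulVec w)) '' C) := by
      rintro _ ⟨w, hw, rfl⟩
      have hgw : g.mulVec w ∈ C := by rw [← hg.2]; exact ⟨w, hw, rfl⟩
      have hG2 : r ≤ gaugeM C (g.mulVec w) w := by
        apply le_csInf
        · obtain ⟨t, ht, hmem⟩ := aux_gauge_nonempty hC hw (g.mulVec w)
          exact ⟨t, ht, hmem⟩
        · rintro t ⟨ht, hmem⟩
          have := aux_eig_le hC g hg.2 z ζ hζ hzeig hw ht hmem
          rwa [hzr] at this
      have hG1 : s⁻¹ ≤ gaugeM C w (g.mulVec w) := by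
        apply le_csInf
        · obtain ⟨t, ht, hmem⟩ := aux_gauge_nonempty hC hgw w
          exact ⟨t, ht, hmem⟩
        · rintro t ⟨ht, hmem⟩
          have hmem' : t • (g.mulVec w) - h.mulVec (g.mulVec w) ∈ closure C := by
            rw [hginv w]; exact hmem
          have := aux_eig_le hC h hhC z'⁻¹ ζ' hζ' hz'inv hgw ht hmem'
          rwa [norm_inv, hz's] at this
      have hG1pos : 0 < gaugeM C w (g.mulVec w) := lt_of_lt_of_le (inv_pos.mpr hspos) hG1
      have hprod : s⁻¹ * r ≤ gaugeM C w (g.mulVec w) * gaugeM C (g.mulVec w) w :=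
        mul_le_mul hG1 hG2 (le_of_lt hrpos) (le_of_lt hG1pos)
      have hppos : 0 < s⁻¹ * r := by positivity
      have hlog := Real.log_le_log hppos hprod
      rw [hLdef]
      unfold hilbertDist
      linarith
    have hL0 : L ≤ 0 := hinf.2 hLlb
    have hlog0 : Real.log (s⁻¹ * r) ≤ 0 := by rw [hLdef] at hL0; linarith
    have h1 : s⁻¹ * r ≤ 1 := (Real.log_nonpos_iff (by positivity)).mp hlog0
    have h2 := mul_le_mul_of_nonneg_left h1 (le_of_lt hspos)
    rw [mul_one] at h2
    calc r = s * (s⁻¹ * r) := by field_simp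
      _ ≤ s := h2
  refine ⟨fun r hr s hs => le_antisymm (key r hr s hs) (key s hs r hr), ?_⟩
  obtain ⟨α, hα⟩ := hfixu
  obtain ⟨β, hβ⟩ := hfixv
  have hposgen : ∀ (α' : ℝ) (u' : Vd d), u' ∈ closure C → u' ≠ 0 →
      g.mulVec u' = α' • u' → 0 < α' := by
    intro α' u' hu' hu'0 hα'
    have hαu : α' • u' ∈ closure C := by rw [← hα']; exact aux_mulVec_closure hg.2 hu'
    rcases lt_trichotomy α' 0 with hneg | h0 | hpos
    · exfalso
      apply hu'0
      apply hC.2.2.2.2 u' hu'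
      have hpos' : (0:ℝ) < (-α')⁻¹ := inv_pos.mpr (neg_pos.mpr hneg)
      have := aux_clC_smul hC hαu hpos'
      have heq : (-α')⁻¹ • (α' • u') = -u' := by
        rw [smul_smul]
        have h9 : (-α') ≠ 0 := ne_of_gt (neg_pos.mpr hneg)
        have h10 : (-α')⁻¹ * α' = -1 := by
          calc (-α')⁻¹ * α' = -((-α')⁻¹ * (-α')) := by ring
            _ = -1 := by rw [inv_mul_cancel₀ h9]
        rw [h10, neg_one_smul]
      rwa [heq] at this
    · exfalso
      apply hu'0
      have : g.mulVec u' = 0 := by rw [hα', h0, zero_smul]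
      have h2 := hginv u'
      rw [this] at h2
      rw [← h2, Matrix.mulVec_zero]
    · exact hpos
  have hαpos : 0 < α := hposgen α u hu hu0 hα
  have hβpos : 0 < β := hposgen β v hvcl hv0 hβ
  have hmα : |α| ∈ eigMods g := aux_real_mem_eigMods hu0 hα
  have hmβ : |β| ∈ eigMods g := aux_real_mem_eigMods hv0 hβ
  have hαβ : α = β := by
    have h1 := key _ hmα _ hmβ
    have h2 := key _ hmβ _ hmα
    rw [abs_of_pos hαpos, abs_of_pos hβpos] at h1 h2
    linarith
  intro s t hs ht
  refine ⟨α, ?_⟩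
  rw [Matrix.mulVec_add, Matrix.mulVec_smul, Matrix.mulVec_smul, hα, hβ, ← hαβ]
  module


end
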